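/- Let A be a nonempty finite set of arms with |A| = K ≥ 2, let c ∈ ℝ, δ ≥ 0, and x > 0. For each a ∈ A let m_a ≥ x and m'_a ≥ x be integers; let X_{a,1}, …, X_{a,m_a} be i.i.d. [0,1]-valued with mean μ_a, and Y_{a,1}, …, Y_{a,m'_a} be i.i.d. [0,1]-valued with mean C_a, with all 2K families mutually independent. Assume ρ = min_{a ≠ b} |μ_a − μ_b| > 0 and that { a ∈ A : C_a ≤ c − δ } is nonempty. Let Â = { a ∈ A : Ȳ_a ≤ c } where Ȳ_a is the empirical mean cost, and let X̄_a be the empirical mean reward. Then with probability at least 1 − 2K·exp(−2δ²x) − 2K·exp(−ρ²x/2), the following holds: { a : C_a ≤ c − δ } ⊆ Â ⊆ { a : C_a ≤ c + δ } (so Â is a nonempty δ-feasible set), and every a* ∈ A with a* ∈ Â and X̄_{a*} = max_{a ∈ Â} X̄_a satisfies μ_{a*} = max_{a ∈ Â} μ_a; in particular a* maximizes the mean reward over some δ-feasible set of arms. -/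

import Mathlib

open MeasureTheory ProbabilityTheory

section Aux

/-- Key scalar inequality behind Hoeffding's lemma for `[0,1]` variables. -/
lemma key_scalar_ineq {p : ℝ} (hp0 : 0 ≤ p) (hp1 : p ≤ 1) (t : ℝ) :
    1 - p + p * Real.exp t ≤ Real.exp (t * p + t ^ 2 / 8) := by
  set D : ℝ → ℝ := fun s => 1 - p + p * Real.exp s with hDdef
  have hDpos : ∀ s, 0 < D s := by
    intro s
    rcases eq_or_lt_of_le hp0 with h | h
    · simp [hDdef, ← h]
    · have : 0 < p * Real.exp s := mul_pos h (Real.exp_pos s)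
      simp only [hDdef]; linarith
  have hD : ∀ s, HasDerivAt D (p * Real.exp s) s := fun s =>
    ((Real.hasDerivAt_exp s).const_mul p).const_add (1 - p)
  set f : ℝ → ℝ := fun s => p * (1 - p) * (Real.exp s - 1) / D s with hfdef
  have hf : ∀ s, HasDerivAt f (p * (1 - p) * Real.exp s / (D s) ^ 2) s := by
    intro s
    have hnum : HasDerivAt (fun s => p * (1 - p) * (Real.exp s - 1))
        (p * (1 - p) * Real.exp s) s := by
      simpa using (((Real.hasDerivAt_exp s).sub_const 1).const_mul (p * (1 - p)))
    have := hnum.div (hD s) (hDpos s).ne'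
    refine this.congr_deriv ?_
    have hDs := (hDpos s).ne'
    field_simp [hDdef]
    ring
  set h : ℝ → ℝ := fun s => s / 4 - f s with hhdef
  have hh : ∀ s, HasDerivAt h (1 / 4 - p * (1 - p) * Real.exp s / (D s) ^ 2) s := by
    intro s
    exact ((hasDerivAt_id s).div_const 4).sub (hf s)
  have hh'pos : ∀ s, 0 ≤ 1 / 4 - p * (1 - p) * Real.exp s / (D s) ^ 2 := by
    intro s
    rw [sub_nonneg, div_le_iff₀ (pow_pos (hDpos s) 2)]
    have := sq_nonneg ((1 - p) - p * Real.exp s)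
    have hE := (Real.exp_pos s).le
    simp only [hDdef]
    nlinarith
  have hhmono : Monotone h :=
    monotone_of_hasDerivAt_nonneg hh (fun s => hh'pos s)
  have hh0 : h 0 = 0 := by simp [hhdef, hfdef]
  set g : ℝ → ℝ := fun s => s * p + s ^ 2 / 8 - Real.log (D s) with hgdef
  have hg : ∀ s, HasDerivAt g (h s) s := by
    intro s
    have h1 : HasDerivAt (fun s : ℝ => s * p) p s := by
      simpa using (hasDerivAt_id s).mul_const p
    have h2 : HasDerivAt (fun s : ℝ => s ^ 2 / 8) (s / 4) s := by
      have := (hasDerivAt_pow 2 s).div_const 8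
      refine this.congr_deriv ?_; ring
    have h3 : HasDerivAt (fun s => Real.log (D s)) (p * Real.exp s / D s) s :=
      (hD s).log (hDpos s).ne'
    have := (h1.add h2).sub h3
    refine this.congr_deriv ?_
    have hDs := (hDpos s).ne'
    simp only [hhdef, hfdef]
    field_simp
    ring
  have hg0 : g 0 = 0 := by simp [hgdef, hDdef]
  have hgnonneg : ∀ s, 0 ≤ g s := by
    intro s
    rcases le_total 0 s with hs | hs
    · have hmono : MonotoneOn g (Set.Ici 0) := by
        apply monotoneOn_of_hasDerivWithinAt_nonneg (convex_Ici 0)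
          (fun u _ => (hg u).continuousAt.continuousWithinAt)
          (fun u _ => (hg u).hasDerivWithinAt)
        intro u hu
        rw [interior_Ici] at hu
        have : h 0 ≤ h u := hhmono (le_of_lt hu)
        linarith [hh0 ▸ this]
      have := hmono (Set.self_mem_Ici) (Set.mem_Ici.2 hs) hs
      linarith [hg0 ▸ this]
    · have hanti : AntitoneOn g (Set.Iic 0) := by
        apply antitoneOn_of_hasDerivWithinAt_nonpos (convex_Iic 0)
          (fun u _ => (hg u).continuousAt.continuousWithinAt)
          (fun u _ => (hg u).hasDerivWithinAt)
        intro u hu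
        rw [interior_Iic] at hu
        have : h u ≤ h 0 := hhmono (le_of_lt hu)
        linarith [hh0 ▸ this]
      have := hanti (Set.mem_Iic.2 hs) (Set.self_mem_Iic) hs
      linarith [hg0 ▸ this]
  have := hgnonneg t
  have hlog : Real.log (D t) ≤ t * p + t ^ 2 / 8 := by
    simp only [hgdef] at this; linarith
  calc D t = Real.exp (Real.log (D t)) := (Real.exp_log (hDpos t)).symm
    _ ≤ Real.exp (t * p + t ^ 2 / 8) := Real.exp_le_exp.2 hlog

variable {Ω : Type*} [MeasurableSpace Ω] {P : Measure Ω} [IsProbabilityMeasure P]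

lemma integrable_of_range01 {Z : Ω → ℝ} (hZm : Measurable Z)
    (hZr : ∀ ω, Z ω ∈ Set.Icc (0:ℝ) 1) : Integrable Z P := by
  refine Integrable.mono' (integrable_const 1) hZm.aestronglyMeasurable ?_
  refine Filter.Eventually.of_forall fun ω => ?_
  rw [Real.norm_eq_abs, abs_le]
  exact ⟨by linarith [(hZr ω).1], (hZr ω).2⟩

lemma integrable_exp_mul_of_range01 {Z : Ω → ℝ} (hZm : Measurable Z)
    (hZr : ∀ ω, Z ω ∈ Set.Icc (0:ℝ) 1) (t : ℝ) :
    Integrable (fun ω => Real.exp (t * Z ω)) P := by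
  refine Integrable.mono' (integrable_const (Real.exp |t|))
    (hZm.const_mul t).exp.aestronglyMeasurable ?_
  refine Filter.Eventually.of_forall fun ω => ?_
  rw [Real.norm_eq_abs, abs_of_pos (Real.exp_pos _), Real.exp_le_exp]
  calc t * Z ω ≤ |t * Z ω| := le_abs_self _
    _ = |t| * |Z ω| := abs_mul _ _
    _ ≤ |t| * 1 := by
        refine mul_le_mul_of_nonneg_left ?_ (abs_nonneg t)
        rw [abs_le]; exact ⟨by linarith [(hZr ω).1], (hZr ω).2⟩
    _ = |t| := mul_one _

/-- Hoeffding's lemma for `[0,1]`-valued random variables. -/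
lemma mgf_le_of_range01 {Z : Ω → ℝ} (hZm : Measurable Z)
    (hZr : ∀ ω, Z ω ∈ Set.Icc (0:ℝ) 1) (t : ℝ) :
    mgf Z P t ≤ Real.exp (t * (∫ ω, Z ω ∂P) + t ^ 2 / 8) := by
  have hZint : Integrable Z P := integrable_of_range01 hZm hZr
  have hmean0 : 0 ≤ ∫ ω, Z ω ∂P := integral_nonneg fun ω => (hZr ω).1
  have hmean1 : (∫ ω, Z ω ∂P) ≤ 1 := by
    calc (∫ ω, Z ω ∂P) ≤ ∫ _ω, (1:ℝ) ∂P := integral_mono hZint (integrable_const 1)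
          (fun ω => (hZr ω).2)
      _ = 1 := by simp
  have hpt : ∀ ω, Real.exp (t * Z ω) ≤ 1 - Z ω + Z ω * Real.exp t := by
    intro ω
    obtain ⟨h0, h1⟩ := hZr ω
    have := convexOn_exp.2 (Set.mem_univ (0:ℝ)) (Set.mem_univ t)
      (by linarith : (0:ℝ) ≤ 1 - Z ω) h0 (by ring)
    simp only [smul_eq_mul, mul_zero, zero_add, Real.exp_zero, mul_one] at this
    calc Real.exp (t * Z ω) = Real.exp (Z ω * t) := by rw [mul_comm]
      _ ≤ 1 - Z ω + Z ω * Real.exp t := this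
  have hint2 : Integrable (fun ω => 1 - Z ω + Z ω * Real.exp t) P :=
    ((integrable_const 1).sub hZint).add (hZint.mul_const _)
  calc mgf Z P t = ∫ ω, Real.exp (t * Z ω) ∂P := rfl
    _ ≤ ∫ ω, (1 - Z ω + Z ω * Real.exp t) ∂P :=
        integral_mono (integrable_exp_mul_of_range01 hZm hZr t) hint2 hpt
    _ = 1 - (∫ ω, Z ω ∂P) + (∫ ω, Z ω ∂P) * Real.exp t := by
        rw [integral_add (show Integrable (fun ω => 1 - Z ω) P from
            (integrable_const 1).sub hZint) (hZint.mul_const _),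
          integral_sub (integrable_const 1) hZint, integral_mul_const]
        simp
    _ ≤ Real.exp (t * (∫ ω, Z ω ∂P) + t ^ 2 / 8) := key_scalar_ineq hmean0 hmean1 t

/-- Independence is preserved under injective reindexing. -/
lemma iIndepFun_precomp {Ω ι ι' : Type*} [MeasurableSpace Ω] {P : Measure Ω}
    (g : ι' → ι) (hg : Function.Injective g) {f : ι → Ω → ℝ}
    (h : iIndepFun f P) :
    iIndepFun (fun i => f (g i)) P := by
  classical
  rw [iIndepFun_iff_measure_inter_preimage_eq_mul] at h ⊢
  intro s sets hsets
  have hext : ∀ j ∈ s, Function.extend g sets (fun _ => Set.univ) (g j) = sets j := by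
    intro j _
    exact hg.extend_apply sets _ j
  have h1 := h (s.image g) (sets := Function.extend g sets (fun _ => Set.univ)) ?_
  · have hInter : (⋂ i ∈ s.image g, f i ⁻¹' Function.extend g sets (fun _ => Set.univ) i)
        = ⋂ j ∈ s, (fun ω => f (g j) ω) ⁻¹' sets j := by
      rw [Finset.set_biInter_finset_image]
      exact Set.iInter₂_congr fun j hj => by rw [hext j hj]
    have hProd : (∏ i ∈ s.image g, P (f i ⁻¹' Function.extend g sets (fun _ => Set.univ) i))
        = ∏ j ∈ s, P ((fun ω => f (g j) ω) ⁻¹' sets j) := by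
      rw [Finset.prod_image (fun a _ b _ hab => hg hab)]
      exact Finset.prod_congr rfl fun j hj => by rw [hext j hj]
    rw [hInter, hProd] at h1
    exact h1
  · intro i hi
    obtain ⟨j, hj, rfl⟩ := Finset.mem_image.1 hi
    rw [hg.extend_apply sets _ j]
    exact hsets j hj

/-- One-sided Hoeffding inequality for sums of independent `[0,1]`-valued variables. -/
lemma hoeffding_one_side
    {n : ℕ} (Z : Fin n → Ω → ℝ) (hZm : ∀ i, Measurable (Z i))
    (hZr : ∀ i ω, Z i ω ∈ Set.Icc (0:ℝ) 1)
    (hind : iIndepFun Z P)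
    (δ : ℝ) (hδ : 0 ≤ δ) :
    P {ω | (∑ i, ∫ x, Z i x ∂P) + n * δ ≤ ∑ i, Z i ω} ≤
      ENNReal.ofReal (Real.exp (-2 * n * δ ^ 2)) := by
  set t : ℝ := 4 * δ with ht
  have htnn : 0 ≤ t := by positivity
  have hint : ∀ i ∈ Finset.univ, Integrable (fun ω => Real.exp (t * Z i ω)) P :=
    fun i _ => integrable_exp_mul_of_range01 (hZm i) (hZr i) t
  have hintS : Integrable (fun ω => Real.exp (t * (∑ i, Z i) ω)) P :=
    hind.integrable_exp_mul_sum hZm hint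
  have hset : {ω | (∑ i, ∫ x, Z i x ∂P) + n * δ ≤ ∑ i, Z i ω}
      = {ω | (∑ i, ∫ x, Z i x ∂P) + n * δ ≤ (∑ i, Z i) ω} := by
    simp [Finset.sum_apply]
  rw [hset]
  rw [ENNReal.le_ofReal_iff_toReal_le (measure_ne_top _ _) (Real.exp_pos _).le]
  calc (P {ω | (∑ i, ∫ x, Z i x ∂P) + n * δ ≤ (∑ i, Z i) ω}).toReal
      ≤ Real.exp (-t * ((∑ i, ∫ x, Z i x ∂P) + n * δ)) * mgf (∑ i, Z i) P t :=
        measure_ge_le_exp_mul_mgf _ htnn hintS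
    _ ≤ Real.exp (-t * ((∑ i, ∫ x, Z i x ∂P) + n * δ)) *
        Real.exp (∑ i, (t * (∫ x, Z i x ∂P) + t ^ 2 / 8)) := by
        refine mul_le_mul_of_nonneg_left ?_ (Real.exp_pos _).le
        rw [hind.mgf_sum hZm, Real.exp_sum]
        exact Finset.prod_le_prod (fun i _ => mgf_nonneg)
          (fun i _ => mgf_le_of_range01 (hZm i) (hZr i) t)
    _ = Real.exp (-t * ((∑ i, ∫ x, Z i x ∂P) + n * δ)
          + (t * (∑ i, ∫ x, Z i x ∂P) + n * (t ^ 2 / 8))) := by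
        rw [← Real.exp_add]
        congr 2
        rw [Finset.sum_add_distrib, ← Finset.mul_sum, Finset.sum_const]
        simp [mul_comm]
    _ = Real.exp (-2 * n * δ ^ 2) := by
        congr 1
        rw [ht]; ring

/-- Two-sided Hoeffding inequality for the empirical mean. -/
lemma hoeffding_two_sided
    {n : ℕ} (hn : 0 < n) (Z : Fin n → Ω → ℝ) (hZm : ∀ i, Measurable (Z i))
    (hZr : ∀ i ω, Z i ω ∈ Set.Icc (0:ℝ) 1)
    (C0 : ℝ) (hmean : ∀ i, ∫ ω, Z i ω ∂P = C0)
    (hind : iIndepFun Z P)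
    (ε : ℝ) (hε : 0 ≤ ε) :
    P {ω | ε ≤ |1/(n:ℝ) * ∑ i, Z i ω - C0|} ≤
      ENNReal.ofReal (2 * Real.exp (-2 * n * ε ^ 2)) := by
  have hnpos : (0:ℝ) < n := Nat.cast_pos.2 hn
  set W : Fin n → Ω → ℝ := fun i ω => 1 - Z i ω with hWdef
  have hWm : ∀ i, Measurable (W i) := fun i => (measurable_const.sub (hZm i))
  have hWr : ∀ i ω, W i ω ∈ Set.Icc (0:ℝ) 1 := by
    intro i ω; obtain ⟨h0, h1⟩ := hZr i ω
    exact ⟨by simp only [hWdef]; linarith, by simp only [hWdef]; linarith⟩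
  have hWind : iIndepFun W P := by
    have := hind.comp (fun _ => fun y : ℝ => 1 - y)
      (fun _ => measurable_const.sub measurable_id)
    exact this
  have hWmean : ∀ i, ∫ ω, W i ω ∂P = 1 - C0 := by
    intro i
    have hint : Integrable (Z i) P := integrable_of_range01 (hZm i) (hZr i)
    simp only [hWdef]
    rw [integral_sub (integrable_const 1) hint, integral_const, hmean i]
    simp
  have key : ∀ c0 S : ℝ, ε ≤ 1/(n:ℝ) * S - c0 → (n:ℝ) * c0 + n * ε ≤ S := by
    intro c0 S h
    have h2 := mul_le_mul_of_nonneg_left (by linarith : c0 + ε ≤ 1/(n:ℝ) * S)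
      (le_of_lt hnpos)
    have h3 : (n:ℝ) * (1/(n:ℝ) * S) = S := by field_simp
    rw [mul_add, h3] at h2
    exact h2
  have hsub : {ω | ε ≤ |1/(n:ℝ) * ∑ i, Z i ω - C0|} ⊆
      {ω | (∑ i, ∫ x, Z i x ∂P) + n * ε ≤ ∑ i, Z i ω} ∪
      {ω | (∑ i, ∫ x, W i x ∂P) + n * ε ≤ ∑ i, W i ω} := by
    intro ω hω
    have hsZ : (∑ i, ∫ x, Z i x ∂P) = (n:ℝ) * C0 := by
      rw [Finset.sum_congr rfl fun i _ => hmean i, Finset.sum_const]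
      simp [mul_comm]
    have hsW : (∑ i, ∫ x, W i x ∂P) = (n:ℝ) * (1 - C0) := by
      rw [Finset.sum_congr rfl fun i _ => hWmean i, Finset.sum_const]
      simp [mul_comm]
    rw [Set.mem_setOf_eq] at hω
    rcases le_abs.1 hω with h | h
    · left
      rw [Set.mem_setOf_eq, hsZ]
      exact key _ _ h
    · right
      rw [Set.mem_setOf_eq, hsW]
      have hWsum : (∑ i, W i ω) = (n:ℝ) - ∑ i, Z i ω := by
        simp only [hWdef]
        rw [Finset.sum_sub_distrib, Finset.sum_const]
        simp [mul_comm]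
      have harg : ε ≤ 1/(n:ℝ) * ∑ i, W i ω - (1 - C0) := by
        rw [hWsum]
        have : 1/(n:ℝ) * ((n:ℝ) - ∑ i, Z i ω) - (1 - C0)
            = -(1/(n:ℝ) * ∑ i, Z i ω - C0) := by
          field_simp
          ring
        rw [this]
        linarith
      exact key _ _ harg
  calc P {ω | ε ≤ |1/(n:ℝ) * ∑ i, Z i ω - C0|}
      ≤ P ({ω | (∑ i, ∫ x, Z i x ∂P) + n * ε ≤ ∑ i, Z i ω} ∪
          {ω | (∑ i, ∫ x, W i x ∂P) + n * ε ≤ ∑ i, W i ω}) := measure_mono hsub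
    _ ≤ P {ω | (∑ i, ∫ x, Z i x ∂P) + n * ε ≤ ∑ i, Z i ω} +
        P {ω | (∑ i, ∫ x, W i x ∂P) + n * ε ≤ ∑ i, W i ω} := measure_union_le _ _
    _ ≤ ENNReal.ofReal (Real.exp (-2 * n * ε ^ 2)) +
        ENNReal.ofReal (Real.exp (-2 * n * ε ^ 2)) :=
          add_le_add (hoeffding_one_side Z hZm hZr hind ε hε)
            (hoeffding_one_side W hWm hWr hWind ε hε)
    _ = ENNReal.ofReal (2 * Real.exp (-2 * n * ε ^ 2)) := by
        rw [← ENNReal.ofReal_add (Real.exp_pos _).le (Real.exp_pos _).le]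
        ring_nf

/-- Deterministic core: on the good event the empirical feasible set is a
δ-feasible set and the empirically best arm is a true best arm. -/
lemma det_core {α : Type*} (c δ ρ : ℝ) (μr C Xbar Ybar : α → ℝ)
    (hρle : ∀ a b : α, a ≠ b → ρ ≤ |μr a - μr b|)
    (hfeas : {a : α | C a ≤ c - δ}.Nonempty)
    (hY : ∀ a, |Ybar a - C a| ≤ δ)
    (hX : ∀ a, |Xbar a - μr a| < ρ/2) :
    ({a : α | C a ≤ c - δ} ⊆ {a : α | Ybar a ≤ c} ∧
      {a : α | Ybar a ≤ c} ⊆ {a : α | C a ≤ c + δ}) ∧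
    {a : α | Ybar a ≤ c}.Nonempty ∧
    ∀ a ∈ {a : α | Ybar a ≤ c},
      (∀ b ∈ {a : α | Ybar a ≤ c}, Xbar b ≤ Xbar a) →
      ∀ b ∈ {a : α | Ybar a ≤ c}, μr b ≤ μr a := by
  have hsub1 : {a : α | C a ≤ c - δ} ⊆ {a : α | Ybar a ≤ c} := by
    intro a ha
    rw [Set.mem_setOf_eq] at ha ⊢
    have := (abs_le.1 (hY a)).2
    linarith
  refine ⟨⟨hsub1, ?_⟩, ?_, ?_⟩
  · intro a ha
    rw [Set.mem_setOf_eq] at ha ⊢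
    have := (abs_le.1 (hY a)).1
    linarith
  · obtain ⟨a0, ha0⟩ := hfeas
    exact ⟨a0, hsub1 ha0⟩
  · intro a ha hmax b hb
    by_contra hlt
    push_neg at hlt
    have hab : a ≠ b := fun h => by rw [h] at hlt; exact lt_irrefl _ hlt
    have hρ2 : ρ ≤ μr b - μr a := by
      have := hρle a b hab
      rwa [abs_of_neg (by linarith : μr a - μr b < 0), neg_sub] at this
    have h1 := (abs_lt.1 (hX a)).2
    have h2 := (abs_lt.1 (hX b)).1
    have h3 := hmax b hb
    linarith

end Aux

/-- static core of the main theorem.  With at least `x` reward and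
`x` cost samples per arm, with probability at least
`1 - 2K·exp(-2δ²x) - 2K·exp(-ρ²x/2)` the empirically feasible set `Â` is a
(nonempty) `δ`-feasible set and every empirically-best arm of `Â` maximizes the
true mean reward over `Â`. -/
theorem constrained_greedy_static_core
    {Ω : Type*} [MeasurableSpace Ω] (P : Measure Ω) [IsProbabilityMeasure P]
    {α : Type*} [Fintype α] [DecidableEq α] (K : ℕ) (hK : Fintype.card α = K) (hK2 : 2 ≤ K)
    (c δ x : ℝ) (hδ : 0 ≤ δ) (hx : 0 < x)
    (m m' : α → ℕ) (hm : ∀ a, x ≤ (m a : ℝ)) (hm' : ∀ a, x ≤ (m' a : ℝ))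
    (μr C : α → ℝ)
    (hne : (Finset.univ.offDiag : Finset (α × α)).Nonempty)
    (ρ : ℝ) (hρ : ρ = Finset.univ.offDiag.inf' hne fun p => |μr p.1 - μr p.2|)
    (hρpos : 0 < ρ)
    (hfeas : {a : α | C a ≤ c - δ}.Nonempty)
    (X : (a : α) → Fin (m a) → Ω → ℝ) (Y : (a : α) → Fin (m' a) → Ω → ℝ)
    (hXmeas : ∀ a i, Measurable (X a i)) (hYmeas : ∀ a i, Measurable (Y a i))
    (hXrange : ∀ a i ω, X a i ω ∈ Set.Icc (0 : ℝ) 1)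
    (hYrange : ∀ a i ω, Y a i ω ∈ Set.Icc (0 : ℝ) 1)
    (hXmean : ∀ a i, ∫ ω, X a i ω ∂P = μr a)
    (hYmean : ∀ a i, ∫ ω, Y a i ω ∂P = C a)
    (hXid : ∀ a i j, IdentDistrib (X a i) (X a j) P P)
    (hYid : ∀ a i j, IdentDistrib (Y a i) (Y a j) P P)
    (hindep : iIndepFun
      (Sum.elim (fun p : Σ a : α, Fin (m a) => X p.1 p.2)
                (fun p : Σ a : α, Fin (m' a) => Y p.1 p.2)) P) :
    ENNReal.ofReal
        (1 - 2 * K * Real.exp (-2 * δ ^ 2 * x) - 2 * K * Real.exp (-ρ ^ 2 * x / 2)) ≤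
      P {ω |
        ({a : α | C a ≤ c - δ} ⊆ {a : α | (1 / (m' a : ℝ)) * ∑ i, Y a i ω ≤ c} ∧
         {a : α | (1 / (m' a : ℝ)) * ∑ i, Y a i ω ≤ c} ⊆ {a : α | C a ≤ c + δ}) ∧
        {a : α | (1 / (m' a : ℝ)) * ∑ i, Y a i ω ≤ c}.Nonempty ∧
        ∀ a ∈ {a : α | (1 / (m' a : ℝ)) * ∑ i, Y a i ω ≤ c},
          (∀ b ∈ {a : α | (1 / (m' a : ℝ)) * ∑ i, Y a i ω ≤ c},
            (1 / (m b : ℝ)) * ∑ i, X b i ω ≤ (1 / (m a : ℝ)) * ∑ i, X a i ω) →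
          ∀ b ∈ {a : α | (1 / (m' a : ℝ)) * ∑ i, Y a i ω ≤ c}, μr b ≤ μr a} := by
  -- basic positivity facts
  have hmpos : ∀ a, 0 < m a := fun a => Nat.cast_pos.1 (lt_of_lt_of_le hx (hm a))
  have hm'pos : ∀ a, 0 < m' a := fun a => Nat.cast_pos.1 (lt_of_lt_of_le hx (hm' a))
  -- per-arm independence
  have hindY : ∀ a, iIndepFun (Y a) P := by
    intro a
    have hinj : Function.Injective (fun i : Fin (m' a) =>
        ((Sum.inr ⟨a, i⟩ : (Σ b, Fin (m b)) ⊕ (Σ b, Fin (m' b))))) := by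
      intro i j hij
      simpa using hij
    exact iIndepFun_precomp _ hinj hindep
  have hindX : ∀ a, iIndepFun (X a) P := by
    intro a
    have hinj : Function.Injective (fun i : Fin (m a) =>
        ((Sum.inl ⟨a, i⟩ : (Σ b, Fin (m b)) ⊕ (Σ b, Fin (m' b))))) := by
      intro i j hij
      simpa using hij
    exact iIndepFun_precomp _ hinj hindep
  -- the bad events
  set Ec : α → Set Ω := fun a => {ω | δ < |1/((m' a : ℕ):ℝ) * ∑ i, Y a i ω - C a|} with hEcdef
  set Er : α → Set Ω := fun a => {ω | ρ/2 ≤ |1/((m a : ℕ):ℝ) * ∑ i, X a i ω - μr a|} with hErdef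
  have hEcm : ∀ a, MeasurableSet (Ec a) := by
    intro a
    exact measurableSet_lt measurable_const
      (((Finset.measurable_sum _ (fun i _ => hYmeas a i)).const_mul _).sub measurable_const).abs
  have hErm : ∀ a, MeasurableSet (Er a) := by
    intro a
    exact measurableSet_le measurable_const
      (((Finset.measurable_sum _ (fun i _ => hXmeas a i)).const_mul _).sub measurable_const).abs
  set bad : Set Ω := ⋃ a, (Ec a ∪ Er a) with hbaddef
  have hbadm : MeasurableSet bad := MeasurableSet.iUnion fun a => (hEcm a).union (hErm a)
  -- per-arm probability bounds
  have hEc : ∀ a, P (Ec a) ≤ ENNReal.ofReal (2 * Real.exp (-2 * δ ^ 2 * x)) := by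
    intro a
    have h1 : Ec a ⊆ {ω | δ ≤ |1/((m' a : ℕ):ℝ) * ∑ i, Y a i ω - C a|} := by
      intro ω hω
      simp only [hEcdef, Set.mem_setOf_eq] at hω ⊢
      exact le_of_lt hω
    calc P (Ec a) ≤ P {ω | δ ≤ |1/((m' a : ℕ):ℝ) * ∑ i, Y a i ω - C a|} := measure_mono h1
      _ ≤ ENNReal.ofReal (2 * Real.exp (-2 * (m' a) * δ ^ 2)) :=
          hoeffding_two_sided (hm'pos a) (Y a) (hYmeas a) (hYrange a) (C a) (hYmean a)
            (hindY a) δ hδ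
      _ ≤ ENNReal.ofReal (2 * Real.exp (-2 * δ ^ 2 * x)) := by
          apply ENNReal.ofReal_le_ofReal
          have hδ2 : (0:ℝ) ≤ 2 * δ ^ 2 := by positivity
          have := mul_le_mul_of_nonneg_left (hm' a) hδ2
          refine mul_le_mul_of_nonneg_left (Real.exp_le_exp.2 ?_) (by norm_num)
          nlinarith
  have hEr : ∀ a, P (Er a) ≤ ENNReal.ofReal (2 * Real.exp (-ρ ^ 2 * x / 2)) := by
    intro a
    calc P (Er a)
        ≤ ENNReal.ofReal (2 * Real.exp (-2 * (m a) * (ρ/2) ^ 2)) :=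
          hoeffding_two_sided (hmpos a) (X a) (hXmeas a) (hXrange a) (μr a) (hXmean a)
            (hindX a) (ρ/2) (by positivity)
      _ ≤ ENNReal.ofReal (2 * Real.exp (-ρ ^ 2 * x / 2)) := by
          apply ENNReal.ofReal_le_ofReal
          have hρ2 : (0:ℝ) ≤ ρ ^ 2 / 2 := by positivity
          have := mul_le_mul_of_nonneg_left (hm a) hρ2
          refine mul_le_mul_of_nonneg_left (Real.exp_le_exp.2 ?_) (by norm_num)
          nlinarith
  -- union bound
  have hbad : P bad ≤ ENNReal.ofReal
      (2 * K * Real.exp (-2 * δ ^ 2 * x) + 2 * K * Real.exp (-ρ ^ 2 * x / 2)) := by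
    calc P bad ≤ ∑ a : α, P (Ec a ∪ Er a) := measure_iUnion_fintype_le _ _
      _ ≤ ∑ _a : α, (ENNReal.ofReal (2 * Real.exp (-2 * δ ^ 2 * x)) +
            ENNReal.ofReal (2 * Real.exp (-ρ ^ 2 * x / 2))) :=
          Finset.sum_le_sum fun a _ =>
            le_trans (measure_union_le _ _) (add_le_add (hEc a) (hEr a))
      _ = (Fintype.card α) •
            (ENNReal.ofReal (2 * Real.exp (-2 * δ ^ 2 * x)) +
             ENNReal.ofReal (2 * Real.exp (-ρ ^ 2 * x / 2))) := by
          rw [Finset.sum_const, Finset.card_univ]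
      _ = ENNReal.ofReal
            (2 * K * Real.exp (-2 * δ ^ 2 * x) + 2 * K * Real.exp (-ρ ^ 2 * x / 2)) := by
          rw [hK, ← ENNReal.ofReal_add (by positivity) (by positivity), nsmul_eq_mul,
            ← ENNReal.ofReal_natCast K, ← ENNReal.ofReal_mul (Nat.cast_nonneg K)]
          congr 1
          ring
  -- good event contains the complement of bad
  have hρle : ∀ a b : α, a ≠ b → ρ ≤ |μr a - μr b| := by
    intro a b hab
    rw [hρ]
    exact Finset.inf'_le _ (show (a, b) ∈ Finset.univ.offDiag from
      Finset.mem_offDiag.2 ⟨Finset.mem_univ a, Finset.mem_univ b, hab⟩)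
  have hsub : badᶜ ⊆ {ω |
        ({a : α | C a ≤ c - δ} ⊆ {a : α | (1 / (m' a : ℝ)) * ∑ i, Y a i ω ≤ c} ∧
         {a : α | (1 / (m' a : ℝ)) * ∑ i, Y a i ω ≤ c} ⊆ {a : α | C a ≤ c + δ}) ∧
        {a : α | (1 / (m' a : ℝ)) * ∑ i, Y a i ω ≤ c}.Nonempty ∧
        ∀ a ∈ {a : α | (1 / (m' a : ℝ)) * ∑ i, Y a i ω ≤ c},
          (∀ b ∈ {a : α | (1 / (m' a : ℝ)) * ∑ i, Y a i ω ≤ c},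
            (1 / (m b : ℝ)) * ∑ i, X b i ω ≤ (1 / (m a : ℝ)) * ∑ i, X a i ω) →
          ∀ b ∈ {a : α | (1 / (m' a : ℝ)) * ∑ i, Y a i ω ≤ c}, μr b ≤ μr a} := by
    intro ω hω
    simp only [hbaddef, Set.mem_compl_iff, Set.mem_iUnion, not_exists, Set.mem_union,
      not_or, hEcdef, hErdef, Set.mem_setOf_eq] at hω
    have hY : ∀ a, |1/((m' a : ℕ):ℝ) * ∑ i, Y a i ω - C a| ≤ δ :=
      fun a => not_lt.1 (hω a).1
    have hX : ∀ a, |1/((m a : ℕ):ℝ) * ∑ i, X a i ω - μr a| < ρ/2 :=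
      fun a => not_le.1 (hω a).2
    exact det_core c δ ρ μr C
      (fun a => 1/((m a : ℕ):ℝ) * ∑ i, X a i ω)
      (fun a => 1/((m' a : ℕ):ℝ) * ∑ i, Y a i ω)
      hρle hfeas hY hX
  -- final assembly
  calc ENNReal.ofReal
        (1 - 2 * K * Real.exp (-2 * δ ^ 2 * x) - 2 * K * Real.exp (-ρ ^ 2 * x / 2))
      = 1 - ENNReal.ofReal
          (2 * K * Real.exp (-2 * δ ^ 2 * x) + 2 * K * Real.exp (-ρ ^ 2 * x / 2)) := by
        rw [sub_sub, ENNReal.ofReal_sub _ (by positivity), ENNReal.ofReal_one]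
    _ ≤ 1 - P bad := tsub_le_tsub_left hbad 1
    _ = P badᶜ := (prob_compl_eq_one_sub hbadm).symm
    _ ≤ _ := measure_mono hsub
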